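/- Fix α > 0 and set w_j = (1+α)^{j-1} for j ≥ 1. Then lim_{n→∞} ( Σ_{j=1}^n w_j² ) / ( Σ_{j=1}^n w_j )² = α/(2+α). Consequently, if η₁, η₂, … are independent real random variables with mean 0 and common variance R > 0, the exponentially weighted average μ_n = (Σ_{j=1}^n w_j η_j)/(Σ_{j=1}^n w_j) satisfies lim_{n→∞} E[μ_n²] = α R/(2+α), which is the residual covariance of the regularized particle filter mean around the true state when resampling with constant bandwidth factor α at every step. -/

import Mathlib

open Finset Filter MeasureTheory ProbabilityTheory

lemma icc_sum_pow (r : ℝ) (f : ℕ → ℝ) (n : ℕ) :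
    ∑ j ∈ Icc 1 n, f (j - 1) = ∑ k ∈ Finset.range n, f k := by
  induction n with
  | zero => simp
  | succ n ih =>
    rw [Finset.sum_Icc_succ_top (Nat.one_le_iff_ne_zero.mpr (Nat.succ_ne_zero n)),
      Finset.sum_range_succ, ih]
    simp

lemma ratio_tendsto (α : ℝ) (hα : 0 < α) :
    Tendsto (fun n => (∑ j ∈ Icc 1 n, ((1 + α) ^ (j - 1)) ^ 2) /
        (∑ j ∈ Icc 1 n, (1 + α) ^ (j - 1)) ^ 2) atTop (nhds (α / (2 + α))) := by
  set r : ℝ := 1 + α with hr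
  have hr1 : 1 < r := by simp [hr, hα]
  have hr0 : 0 < r := by linarith
  have hrne : r ≠ 1 := ne_of_gt hr1
  have hr2ne : r ^ 2 ≠ 1 := by nlinarith [sq_nonneg (r - 1)]
  -- x_n = (1/r)^n → 0
  have hx : Tendsto (fun n : ℕ => (1 / r) ^ n) atTop (nhds 0) := by
    apply tendsto_pow_atTop_nhds_zero_of_lt_one
    · positivity
    · rw [div_lt_one hr0]; linarith
  have hg : Tendsto (fun n : ℕ => (r - 1) / (r + 1) *
      ((1 - ((1 / r) ^ n) ^ 2) / (1 - (1 / r) ^ n) ^ 2)) atTop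
      (nhds (α / (2 + α))) := by
    have h1 : Tendsto (fun n : ℕ => (1 - ((1 / r) ^ n) ^ 2) / (1 - (1 / r) ^ n) ^ 2)
        atTop (nhds 1) := by
      have hnum : Tendsto (fun n : ℕ => 1 - ((1 / r) ^ n) ^ 2) atTop (nhds (1 - 0 ^ 2)) :=
        tendsto_const_nhds.sub (hx.pow 2)
      have hden : Tendsto (fun n : ℕ => (1 - (1 / r) ^ n) ^ 2) atTop (nhds ((1 - 0) ^ 2)) :=
        (tendsto_const_nhds.sub hx).pow 2
      have := hnum.div hden (by norm_num)
      simpa [Pi.div_def] using this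
    have := h1.const_mul ((r - 1) / (r + 1))
    simp only [mul_one] at this
    convert this using 2
    rw [hr]; ring_nf
  refine Tendsto.congr' ?_ hg
  filter_upwards [Filter.eventually_ge_atTop 1] with n hn
  have hsum1 : ∑ j ∈ Icc 1 n, r ^ (j - 1) = (r ^ n - 1) / (r - 1) := by
    rw [icc_sum_pow r (fun k => r ^ k) n, geom_sum_eq hrne]
  have hsum2 : ∑ j ∈ Icc 1 n, (r ^ (j - 1)) ^ 2 = ((r ^ 2) ^ n - 1) / (r ^ 2 - 1) := by
    rw [show (fun j => (r ^ (j - 1)) ^ 2) = fun j => (r ^ 2) ^ (j - 1) by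
      funext j; rw [← pow_mul, ← pow_mul, Nat.mul_comm],
      icc_sum_pow (r ^ 2) (fun k => (r ^ 2) ^ k) n, geom_sum_eq hr2ne]
  have hrn1 : 1 < r ^ n := one_lt_pow₀ hr1 (Nat.one_le_iff_ne_zero.mp hn)
  have h2n : (r ^ 2) ^ n = (r ^ n) ^ 2 := by rw [← pow_mul, ← pow_mul, Nat.mul_comm]
  have h1n : (1 / r) ^ n = 1 / r ^ n := by rw [div_pow, one_pow]
  rw [hsum1, hsum2, h2n, h1n]
  set t := r ^ n with ht
  have ht0 : t ≠ 0 := by positivity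
  have ht1 : t - 1 ≠ 0 := by intro h; nlinarith
  have ha1 : r - 1 ≠ 0 := by intro h; nlinarith
  have ha2 : r + 1 ≠ 0 := by intro h; nlinarith
  have ha3 : r ^ 2 - 1 ≠ 0 := by intro h; nlinarith
  field_simp
  ring

theorem stmt_3 (α : ℝ) (hα : 0 < α)
    {Ω : Type*} [MeasureSpace Ω] [IsProbabilityMeasure (volume : Measure Ω)]
    (R : ℝ) (hR : 0 < R) (η : ℕ → Ω → ℝ)
    (hindep : iIndepFun η volume)
    (hmem : ∀ j, MemLp (η j) 2 volume)
    (hmean : ∀ j, ∫ ω, η j ω = 0)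
    (hvar : ∀ j, ∫ ω, (η j ω) ^ 2 = R) :
    Tendsto (fun n => (∑ j ∈ Icc 1 n, ((1 + α) ^ (j - 1)) ^ 2) /
        (∑ j ∈ Icc 1 n, (1 + α) ^ (j - 1)) ^ 2) atTop (nhds (α / (2 + α))) ∧
      Tendsto (fun n => ∫ ω, ((∑ j ∈ Icc 1 n, (1 + α) ^ (j - 1) * η j ω) /
          (∑ j ∈ Icc 1 n, (1 + α) ^ (j - 1))) ^ 2) atTop
        (nhds (α * R / (2 + α))) := by
  have hfirst := ratio_tendsto α hα
  refine ⟨hfirst, ?_⟩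
  set r : ℝ := 1 + α with hrdef
  set w : ℕ → ℝ := fun j => r ^ (j - 1) with hw
  -- variance of each η j is R
  have hvarη : ∀ j, variance (η j) volume = R := by
    intro j
    rw [variance_eq_sub (hmem j)]
    have : (volume : Measure Ω)[(η j) ^ 2] = R := by
      rw [← hvar j]; rfl
    rw [this]
    have : (volume : Measure Ω)[η j] = 0 := hmean j
    rw [this]; ring
  -- key: the integral equals R * (∑ w_j²)/(∑ w_j)²
  have hkey : ∀ n, (∫ ω, ((∑ j ∈ Icc 1 n, w j * η j ω) / (∑ j ∈ Icc 1 n, w j)) ^ 2)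
      = R * ((∑ j ∈ Icc 1 n, (w j) ^ 2) / (∑ j ∈ Icc 1 n, w j) ^ 2) := by
    intro n
    set S := ∑ j ∈ Icc 1 n, w j with hS
    -- the sum as a random variable
    have hX : ∀ j, MemLp (fun ω => w j * η j ω) 2 volume := fun j => (hmem j).const_mul _
    have hsummem : MemLp (fun ω => ∑ j ∈ Icc 1 n, w j * η j ω) 2 volume := by
      have h := memLp_finset_sum' (μ := (volume : Measure Ω)) (Icc 1 n)
        (f := fun j ω => w j * η j ω) (fun j _ => hX j)
      have heqf : (∑ j ∈ Icc 1 n, fun ω => w j * η j ω)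
          = fun ω => ∑ j ∈ Icc 1 n, w j * η j ω := by funext ω; simp
      exact heqf ▸ h
    have hmeanY : ∫ ω, (∑ j ∈ Icc 1 n, w j * η j ω) = 0 := by
      rw [integral_finset_sum _ (fun j _ => ((hmem j).integrable one_le_two).const_mul _)]
      simp [integral_const_mul, hmean]
    have hvarY : ∫ ω, (∑ j ∈ Icc 1 n, w j * η j ω) ^ 2
        = ∑ j ∈ Icc 1 n, (w j) ^ 2 * R := by
      have hvd := variance_eq_sub hsummem
      have hpair : Set.Pairwise ↑(Icc 1 n)
          (fun i j => IndepFun (fun ω => w i * η i ω) (fun ω => w j * η j ω) volume) := by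
        intro i _ j _ hij
        exact (hindep.indepFun hij).comp (measurable_const_mul (w i))
          (measurable_const_mul (w j))
      have hvs := IndepFun.variance_sum (μ := (volume : Measure Ω))
        (X := fun j ω => w j * η j ω) (s := Icc 1 n) (fun j _ => hX j) hpair
      have heq : variance (fun ω => ∑ j ∈ Icc 1 n, w j * η j ω) volume
          = ∑ j ∈ Icc 1 n, (w j) ^ 2 * R := by
        have : (∑ j ∈ Icc 1 n, fun ω => w j * η j ω)
            = fun ω => ∑ j ∈ Icc 1 n, w j * η j ω := by
          funext ω; simp
        rw [← this, hvs]
        refine Finset.sum_congr rfl fun j _ => ?_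
        rw [variance_const_mul, hvarη]
      have h2 : (volume : Measure Ω)[(fun ω => ∑ j ∈ Icc 1 n, w j * η j ω) ^ 2]
          = ∫ ω, (∑ j ∈ Icc 1 n, w j * η j ω) ^ 2 := rfl
      have h3 : (volume : Measure Ω)[(fun ω => ∑ j ∈ Icc 1 n, w j * η j ω)] = 0 := hmeanY
      rw [heq, h2, h3] at hvd
      linarith [hvd]
    calc ∫ ω, ((∑ j ∈ Icc 1 n, w j * η j ω) / S) ^ 2
        = ∫ ω, ((∑ j ∈ Icc 1 n, w j * η j ω)) ^ 2 / S ^ 2 := by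
          congr 1; funext ω; rw [div_pow]
      _ = (∫ ω, ((∑ j ∈ Icc 1 n, w j * η j ω)) ^ 2) / S ^ 2 := integral_div _ _
      _ = (∑ j ∈ Icc 1 n, (w j) ^ 2 * R) / S ^ 2 := by rw [hvarY]
      _ = R * ((∑ j ∈ Icc 1 n, (w j) ^ 2) / S ^ 2) := by
          rw [← Finset.sum_mul]; ring
  have : Tendsto (fun n => R * ((∑ j ∈ Icc 1 n, (w j) ^ 2) / (∑ j ∈ Icc 1 n, w j) ^ 2))
      atTop (nhds (R * (α / (2 + α)))) := hfirst.const_mul R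
  have hfin : Tendsto (fun n => ∫ ω, ((∑ j ∈ Icc 1 n, w j * η j ω) /
      (∑ j ∈ Icc 1 n, w j)) ^ 2) atTop (nhds (R * (α / (2 + α)))) := by
    refine this.congr fun n => (hkey n).symm
  convert hfin using 2
  ring
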